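/- Let K be an integral domain whose group of units K× is infinite, and let (K, K×) be the representation in which K× acts on the K-module K by multiplication. Then an element u ∈ KF is an identity of the representation (K, K×) if and only if u is an identity of every representation (V,G) over K in which the action operators commute, i.e., (v∘g)∘h = (v∘h)∘g for all v ∈ V and g, h ∈ G. (The variety ω𝔄 is generated by (K, K×).) -/

import Mathlib

namespace OmegaAux

/-- The evaluation additive map `(ℕ →₀ ℤ) →+ ℤ`, `m ↦ ∑ i, m i * N ^ i`. -/
noncomputable def lam (N : ℕ) : (ℕ →₀ ℤ) →+ ℤ :=
  Finsupp.liftAddHom fun i => zmultiplesHom ℤ ((N : ℤ) ^ i)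

lemma lam_apply (N : ℕ) (d : ℕ →₀ ℤ) :
    lam N d = d.sum fun i c => c * (N : ℤ) ^ i := by
  rw [lam, Finsupp.liftAddHom_apply]
  refine Finsupp.sum_congr fun i _ => ?_
  simp [zmultiplesHom_apply, zsmul_eq_mul]

lemma lam_ne_zero {d : ℕ →₀ ℤ} (hd : d ≠ 0) {N : ℕ}
    (hN : ∀ i, (d i).natAbs < N) : lam N d ≠ 0 := by
  have hsupp : d.support.Nonempty := Finsupp.support_nonempty_iff.2 hd
  set j := d.support.min' hsupp with hj
  have hjmem : j ∈ d.support := d.support.min'_mem hsupp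
  have hdj : d j ≠ 0 := Finsupp.mem_support_iff.1 hjmem
  have hsplit : lam N d = d j * (N : ℤ) ^ j +
      ∑ i ∈ d.support.erase j, d i * (N : ℤ) ^ i := by
    rw [lam_apply, Finsupp.sum, ← Finset.add_sum_erase _ _ hjmem]
  have hdvd : ((N : ℤ) ^ (j + 1)) ∣ ∑ i ∈ d.support.erase j, d i * (N : ℤ) ^ i := by
    refine Finset.dvd_sum fun i hi => ?_
    have hij : j + 1 ≤ i := by
      rcases Finset.mem_erase.1 hi with ⟨hne, hmem⟩
      have := d.support.min'_le i hmem
      omega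
    exact Dvd.dvd.mul_left (pow_dvd_pow _ hij) _
  obtain ⟨r, hr⟩ := hdvd
  intro h0
  rw [hsplit, hr] at h0
  have hNj : ((N : ℤ) ^ j) ≠ 0 := by
    have : (0 : ℤ) < N := by exact_mod_cast Nat.pos_of_ne_zero (by have := hN j; omega)
    positivity
  have h1 : d j = -((N : ℤ) * r) := by
    have h2 : d j * (N : ℤ) ^ j = (-((N : ℤ) * r)) * (N : ℤ) ^ j := by
      have : (N:ℤ) ^ (j+1) * r = ((N:ℤ) * r) * (N:ℤ) ^ j := by ring
      linarith [h0, this]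
    exact mul_right_cancel₀ hNj h2
  have hdvd2 : (N : ℤ) ∣ d j := ⟨-r, by rw [h1]; ring⟩
  have h3 := Int.le_of_dvd (abs_pos.2 hdj) ((dvd_abs _ _).2 hdvd2)
  have h4 := hN j
  have h5 : |d j| = ((d j).natAbs : ℤ) := Int.abs_eq_natAbs _
  omega


open Polynomial in
lemma vanish {K : Type} [CommRing K] [IsDomain K] [Infinite Kˣ]
    (w : MonoidAlgebra K (Multiplicative (ℕ →₀ ℤ)))
    (h : ∀ χ : Multiplicative (ℕ →₀ ℤ) →* Kˣ,
      w.coeff.sum (fun m c => c * ((χ m : Kˣ) : K)) = 0) :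
    w = 0 := by
  classical
  set S := w.coeff.support with hS
  -- bound on entries
  set M : ℕ := S.sup fun m => (Multiplicative.toAdd m).support.sup
      fun i => ((Multiplicative.toAdd m) i).natAbs with hM
  have hbound : ∀ m ∈ S, ∀ i, ((Multiplicative.toAdd m) i).natAbs ≤ M := by
    intro m hm i
    by_cases hi : i ∈ (Multiplicative.toAdd m).support
    · rw [hM]
      exact le_trans (Finset.le_sup (f := fun i => ((Multiplicative.toAdd m) i).natAbs) hi)
        (Finset.le_sup (f := fun m =>
        (Multiplicative.toAdd m).support.sup fun i => ((Multiplicative.toAdd m) i).natAbs) hm)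
    · simp [Finsupp.notMem_support_iff.1 hi]
  set N : ℕ := 2 * M + 1 with hN
  -- injectivity of lam N on S
  have hinj : ∀ m ∈ S, ∀ m' ∈ S,
      lam N (Multiplicative.toAdd m) = lam N (Multiplicative.toAdd m') → m = m' := by
    intro a ha b hb hab
    by_contra hne
    have hd : Multiplicative.toAdd a - Multiplicative.toAdd b ≠ 0 := by
      intro h0
      exact hne (by
        have := sub_eq_zero.1 h0
        exact Multiplicative.toAdd.injective this)
    refine lam_ne_zero hd (N := N) ?_ (by rw [map_sub, hab, sub_self])
    intro i
    have h1 := hbound a ha i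
    have h2 := hbound b hb i
    have h3 : ((Multiplicative.toAdd a - Multiplicative.toAdd b) i)
        = (Multiplicative.toAdd a) i - (Multiplicative.toAdd b) i := rfl
    rw [h3]
    omega
  -- characters
  have hchi : ∀ t : Kˣ, ∑ m ∈ S, w.coeff m * ((t ^ (lam N (Multiplicative.toAdd m)) : Kˣ) : K) = 0 := by
    intro t
    have := h ((zpowersHom Kˣ t).comp (AddMonoidHom.toMultiplicative (lam N)))
    rw [Finsupp.sum] at this
    simpa using this
  -- shift exponents
  set C : ℤ := ((S.sup fun m => (lam N (Multiplicative.toAdd m)).natAbs : ℕ) : ℤ) with hC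
  set e : Multiplicative (ℕ →₀ ℤ) → ℤ := fun m => lam N (Multiplicative.toAdd m) + C with he
  have hnonneg : ∀ m ∈ S, 0 ≤ e m := by
    intro m hm
    have h1 : (lam N (Multiplicative.toAdd m)).natAbs ≤
        (S.sup fun m => (lam N (Multiplicative.toAdd m)).natAbs) :=
      Finset.le_sup (f := fun m => (lam N (Multiplicative.toAdd m)).natAbs) hm
    simp only [he, hC]
    omega
  set q : Polynomial K := ∑ m ∈ S, Polynomial.C (w.coeff m) * Polynomial.X ^ (e m).toNat with hq
  have hroot : ∀ t : Kˣ, q.eval (t : K) = 0 := by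
    intro t
    have hterm : ∀ m ∈ S, (Polynomial.C (w.coeff m) * Polynomial.X ^ (e m).toNat).eval (t : K)
        = (w.coeff m * ((t ^ (lam N (Multiplicative.toAdd m)) : Kˣ) : K)) * ((t ^ C : Kˣ) : K) := by
      intro m hm
      have h1 : ((t : K)) ^ (e m).toNat = ((t ^ (e m) : Kˣ) : K) := by
        rw [← Units.val_pow_eq_pow_val, ← zpow_natCast, Int.toNat_of_nonneg (hnonneg m hm)]
      rw [Polynomial.eval_mul, Polynomial.eval_C, Polynomial.eval_pow, Polynomial.eval_X, h1,
        he, zpow_add, Units.val_mul, mul_assoc]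
    rw [hq, Polynomial.eval_finset_sum, Finset.sum_congr rfl hterm, ← Finset.sum_mul,
      hchi t, zero_mul]
  have hq0 : q = 0 := by
    refine Polynomial.eq_zero_of_infinite_isRoot q ?_
    refine Set.Infinite.mono ?_ (Set.infinite_range_of_injective
      (f := fun t : Kˣ => (t : K)) (fun a b hab => Units.ext hab))
    rintro x ⟨t, rfl⟩
    exact hroot t
  -- extract coefficients
  ext m
  by_cases hm : m ∈ S
  · have hco : q.coeff ((e m).toNat) = w.coeff m := by
      rw [hq, Polynomial.finset_sum_coeff]
      rw [Finset.sum_eq_single_of_mem m hm]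
      · simp [Polynomial.coeff_C_mul, Polynomial.coeff_X_pow]
      · intro b hb hbm
        have hne : (e b).toNat ≠ (e m).toNat := by
          intro hEq
          have h1 : e b = e m := by
            have := hnonneg b hb; have := hnonneg m hm; omega
          exact hbm (hinj b hb m hm (by simpa [he] using h1))
        simp only [Polynomial.coeff_C_mul, Polynomial.coeff_X_pow]
        rw [if_neg (Ne.symm hne), mul_zero]
    rw [← hco, hq0]
    simp
  · simpa using Finsupp.notMem_support_iff.1 hm


/-- The abelianization map from the free group to `Multiplicative (ℕ →₀ ℤ)`. -/
noncomputable def piAb : FreeGroup ℕ →* Multiplicative (ℕ →₀ ℤ) :=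
  FreeGroup.lift fun i => Multiplicative.ofAdd (Finsupp.single i 1)

lemma step1 {K : Type} [CommRing K] [IsDomain K] [Infinite Kˣ]
    (u : MonoidAlgebra K (FreeGroup ℕ))
    (h : ∀ β : FreeGroup ℕ →* Kˣ,
      (MonoidAlgebra.lift K K (FreeGroup ℕ) ((Units.coeHom K).comp β)) u = 0) :
    MonoidAlgebra.mapDomain piAb u = (0 : MonoidAlgebra K (Multiplicative (ℕ →₀ ℤ))) := by
  apply vanish
  intro χ
  have h1 := h (χ.comp piAb)
  rw [MonoidAlgebra.lift_apply] at h1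
  rw [MonoidAlgebra.coeff_mapDomain, Finsupp.sum_mapDomain_index (fun m => by simp) (fun m c₁ c₂ => by ring)]
  simpa [smul_eq_mul] using h1


lemma action_eq_zero {K : Type} [CommRing K]
    (G : Type) [Group G] (V : Type) [AddCommGroup V] [Module (MonoidAlgebra K G) V]
    (hcomm : ∀ (g h : G) (v : V),
      MonoidAlgebra.of K G g • (MonoidAlgebra.of K G h • v) =
        MonoidAlgebra.of K G h • (MonoidAlgebra.of K G g • v))
    (β : FreeGroup ℕ →* G) (u : MonoidAlgebra K (FreeGroup ℕ))
    (hu : MonoidAlgebra.mapDomain piAb u = (0 : MonoidAlgebra K (Multiplicative (ℕ →₀ ℤ))))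
    (v : V) : (MonoidAlgebra.mapDomainAlgHom K K β u) • v = 0 := by
  classical
  -- the action of `G` on `V` as a monoid hom into `Function.End V`
  set ρ : G →* Function.End V :=
    { toFun := fun g => (fun x => MonoidAlgebra.of K G g • x)
      map_one' := by
        funext x
        show MonoidAlgebra.of K G 1 • x = x
        rw [map_one, one_smul]
      map_mul' := fun g h => by
        funext x
        show MonoidAlgebra.of K G (g * h) • x = MonoidAlgebra.of K G g • (MonoidAlgebra.of K G h • x)
        rw [map_mul, mul_smul] } with hρ
  set τ : G →* (Function.End V)ˣ := ρ.toHomUnits with hτ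
  have hτval : ∀ g : G, ((τ g : (Function.End V)ˣ) : Function.End V) = ρ g := fun g => rfl
  have hcomm' : ∀ x ∈ Set.range τ, ∀ y ∈ Set.range τ, x * y = y * x := by
    rintro x ⟨g, rfl⟩ y ⟨g', rfl⟩
    refine Units.ext ?_
    show (ρ g * ρ g' : Function.End V) = ρ g' * ρ g
    funext x
    exact hcomm g g' x
  set H := Subgroup.closure (Set.range τ) with hH
  letI : CommGroup H := Subgroup.closureCommGroupOfComm hcomm'
  set gen : ℕ → H := fun i => ⟨τ (β (FreeGroup.of i)), Subgroup.subset_closure ⟨_, rfl⟩⟩ with hgen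
  set δ : Multiplicative (ℕ →₀ ℤ) →* H :=
    { toFun := fun m => (Multiplicative.toAdd m).prod fun i n => gen i ^ n
      map_one' := Finsupp.prod_zero_index
      map_mul' := fun a b => by
        show ((Multiplicative.toAdd a + Multiplicative.toAdd b).prod fun i n => gen i ^ n) = _
        exact Finsupp.prod_add_index' (fun i => zpow_zero (gen i))
          (fun i n₁ n₂ => zpow_add (gen i) n₁ n₂) } with hδ
  -- key factorization
  have key : ∀ wrd : FreeGroup ℕ,
      ((τ (β wrd) : (Function.End V)ˣ) : Function.End V)
        = (((δ (piAb wrd) : H) : (Function.End V)ˣ) : Function.End V) := by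
    have : τ.comp β = (H.subtype).comp (δ.comp piAb) := by
      apply FreeGroup.ext_hom
      intro i
      simp only [MonoidHom.comp_apply]
      rw [show piAb (FreeGroup.of i) = Multiplicative.ofAdd (Finsupp.single i 1) from
        FreeGroup.lift_apply_of]
      have hd : δ (Multiplicative.ofAdd (Finsupp.single i 1)) = gen i := by
        show ((Finsupp.single i (1:ℤ)).prod fun i n => gen i ^ n) = gen i
        rw [Finsupp.prod_single_index (h := fun i n => gen i ^ n) (zpow_zero (gen i)), zpow_one]
      rw [hd]
      rfl
    intro wrd
    have h2 : τ (β wrd) = ((δ (piAb wrd) : H) : (Function.End V)ˣ) := by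
      have h3 := DFunLike.congr_fun this wrd
      simpa using h3
    rw [h2]
  -- expand the action as a sum
  have hsingle : ∀ (g : G) (c : K),
      (MonoidAlgebra.single g c : MonoidAlgebra K G) • v
        = (MonoidAlgebra.single (1 : G) c : MonoidAlgebra K G) • (ρ g v) := by
    intro g c
    have : (MonoidAlgebra.single g c : MonoidAlgebra K G)
        = MonoidAlgebra.single (1 : G) c * MonoidAlgebra.single g 1 := by
      rw [MonoidAlgebra.single_mul_single, one_mul, mul_one]
    rw [this, mul_smul]
    rfl
  have hexpand : (MonoidAlgebra.mapDomainAlgHom K K β u) • v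
      = u.coeff.sum fun wrd c => (MonoidAlgebra.single (1 : G) c : MonoidAlgebra K G)
          • ((((δ (piAb wrd) : H) : (Function.End V)ˣ) : Function.End V) v) := by
    have h1 : (MonoidAlgebra.mapDomainAlgHom K K β u) • v
        = (MonoidAlgebra.mapDomain β u).coeff.sum fun g c =>
            (MonoidAlgebra.single g c : MonoidAlgebra K G) • v := by
      rw [MonoidAlgebra.mapDomainAlgHom_apply]
      generalize (MonoidAlgebra.mapDomain (β : FreeGroup ℕ → G) u : MonoidAlgebra K G) = a
      conv_lhs => rw [← MonoidAlgebra.sum_coeff_single a]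
      rw [Finsupp.sum, Finsupp.sum, Finset.sum_smul]
    rw [h1, MonoidAlgebra.coeff_mapDomain, Finsupp.sum_mapDomain_index
      (fun g => by
        show (MonoidAlgebra.single g 0 : MonoidAlgebra K G) • v = 0
        rw [MonoidAlgebra.single_zero, zero_smul])
      (fun g c₁ c₂ => by
        show (MonoidAlgebra.single g (c₁ + c₂) : MonoidAlgebra K G) • v = _
        rw [MonoidAlgebra.single_add, add_smul])]
    refine Finsupp.sum_congr fun wrd _ => ?_
    rw [hsingle (β wrd)]
    congr 1
    have := congrFun (key wrd) v
    exact this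
  rw [hexpand, ← Finsupp.sum_mapDomain_index (f := ⇑piAb)
    (h := fun m c => (MonoidAlgebra.single (1 : G) c : MonoidAlgebra K G)
      • ((((δ m : H) : (Function.End V)ˣ) : Function.End V) v))
    (fun m => by
      show (MonoidAlgebra.single (1:G) (0:K) : MonoidAlgebra K G) • _ = 0
      rw [MonoidAlgebra.single_zero, zero_smul])
    (fun m c₁ c₂ => by
      show (MonoidAlgebra.single (1:G) (c₁ + c₂) : MonoidAlgebra K G) • _ = _
      rw [MonoidAlgebra.single_add, add_smul]),
    ← MonoidAlgebra.coeff_mapDomain, hu, MonoidAlgebra.coeff_zero, Finsupp.sum_zero_index]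

end OmegaAux

/-- over an integral domain `K` with infinite unit group `K×`, an element
`u ∈ KF` is an identity of the representation `(K, K×)` (units acting on `K` by
multiplication) iff `u` is an identity of every representation `(V, G)` whose action
operators pairwise commute; i.e. the variety `ω𝔄` is generated by `(K, K×)`. -/
theorem omegaA_generated_by_units_representation
    (K : Type) [CommRing K] [IsDomain K] [Infinite Kˣ]
    (u : MonoidAlgebra K (FreeGroup ℕ)) :
    (∀ β : FreeGroup ℕ →* Kˣ, ∀ v : K,
        (MonoidAlgebra.lift K K (FreeGroup ℕ) ((Units.coeHom K).comp β)) u * v = 0) ↔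
    (∀ (G : Type) [Group G] (V : Type) [AddCommGroup V] [Module (MonoidAlgebra K G) V],
        (∀ (g h : G) (v : V),
            MonoidAlgebra.of K G g • (MonoidAlgebra.of K G h • v) =
              MonoidAlgebra.of K G h • (MonoidAlgebra.of K G g • v)) →
        ∀ β : FreeGroup ℕ →* G, ∀ v : V, (MonoidAlgebra.mapDomainAlgHom K K β u) • v = 0) := by
  constructor
  · intro h G _ V _ _ hcomm β v
    refine OmegaAux.action_eq_zero G V hcomm β u ?_ v
    exact OmegaAux.step1 u (fun β' => by simpa using h β' 1)
  · intro h β v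
    letI : Module (MonoidAlgebra K Kˣ) K :=
      Module.compHom K (MonoidAlgebra.lift K K Kˣ (Units.coeHom K)).toRingHom
    have hsmul : ∀ (a : MonoidAlgebra K Kˣ) (x : K),
        a • x = (MonoidAlgebra.lift K K Kˣ (Units.coeHom K)) a * x := fun a x => rfl
    have hcomm : ∀ (g h' : Kˣ) (x : K),
        MonoidAlgebra.of K Kˣ g • (MonoidAlgebra.of K Kˣ h' • x) =
          MonoidAlgebra.of K Kˣ h' • (MonoidAlgebra.of K Kˣ g • x) := by
      intro g h' x
      rw [hsmul, hsmul, hsmul, hsmul]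
      ring
    have h2 := h Kˣ K hcomm β v
    rw [hsmul] at h2
    have hφ : (MonoidAlgebra.lift K K Kˣ (Units.coeHom K)).comp
        (MonoidAlgebra.mapDomainAlgHom K K (β : FreeGroup ℕ →* Kˣ))
        = MonoidAlgebra.lift K K (FreeGroup ℕ) ((Units.coeHom K).comp β) := by
      refine MonoidAlgebra.algHom_ext ?_ (Subsingleton.elim _ _)
      intro x
      simp [MonoidAlgebra.mapDomainAlgHom_apply, Finsupp.mapDomain_single]
    have h3 := DFunLike.congr_fun hφ u
    rw [AlgHom.comp_apply] at h3
    rw [← h3]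
    exact h2
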